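/- Let m ≥ 1, N ≥ 1, γ ∈ (0,1], c ∈ (0,1], β ∈ (0,1), q_α ∈ ℝ, and let T_1, …, T_N be independent random variables taking values in [0, m] with E[∑_{i=1}^N T_i] ≥ mN·(1/2 + (γ/2)·c). Let Z := (∑_{i=1}^N T_i − mN/2)/√(mN/4). If √(mN)·γ·c ≥ q_α + √(2m·ln(1/β)), then P(Z ≤ q_α) ≤ β; in particular, this holds whenever N ≥ [q_α + √(2m·ln(1/β))]² / (m·γ²·c²). -/

import Mathlib

open MeasureTheory ProbabilityTheory Real


private lemma D_pos {p : ℝ} (hp0 : 0 ≤ p) (hp1 : p ≤ 1) (s : ℝ) :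
    0 < 1 - p + p * Real.exp s := by
  rcases eq_or_lt_of_le hp0 with h | h
  · simp [← h]
  · nlinarith [mul_pos h (Real.exp_pos s)]

private lemma hoeffding_analytic {p : ℝ} (hp0 : 0 ≤ p) (hp1 : p ≤ 1) (s : ℝ) :
    1 - p + p * Real.exp s ≤ Real.exp (p * s + s ^ 2 / 8) := by
  set f : ℝ → ℝ := fun s => p * s + s ^ 2 / 8 - Real.log (1 - p + p * Real.exp s) with hf
  set g : ℝ → ℝ := fun s => p + s / 4 - p * Real.exp s / (1 - p + p * Real.exp s) with hg
  have hD : ∀ x : ℝ, 0 < 1 - p + p * Real.exp x := D_pos hp0 hp1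
  have hDd : ∀ x : ℝ, HasDerivAt (fun y => 1 - p + p * Real.exp y) (p * Real.exp x) x := by
    intro x
    exact ((Real.hasDerivAt_exp x).const_mul p).const_add (1 - p)
  have hfd : ∀ x : ℝ, HasDerivAt f (g x) x := by
    intro x
    have h1 : HasDerivAt (fun y : ℝ => p * y + y ^ 2 / 8) (p + x * 2 / 8) x := by
      have := ((hasDerivAt_id x).const_mul p).add ((hasDerivAt_pow 2 x).div_const 8)
      refine this.congr_deriv ?_
      simp; ring
    have h2 : HasDerivAt (fun y => Real.log (1 - p + p * Real.exp y))
        (p * Real.exp x / (1 - p + p * Real.exp x)) x := (hDd x).log (hD x).ne'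
    have := h1.sub h2
    refine this.congr_deriv ?_
    simp [hg]; ring
  have hgd : ∀ x : ℝ, HasDerivAt g
      (1 / 4 - p * Real.exp x * (1 - p) / (1 - p + p * Real.exp x) ^ 2) x := by
    intro x
    have h1 : HasDerivAt (fun y : ℝ => p + y / 4) (1 / 4) x := by
      simpa using ((hasDerivAt_id x).div_const 4).const_add p
    have h2 : HasDerivAt (fun y => p * Real.exp y / (1 - p + p * Real.exp y))
        ((p * Real.exp x * (1 - p + p * Real.exp x) - p * Real.exp x * (p * Real.exp x)) /
          (1 - p + p * Real.exp x) ^ 2) x :=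
      ((Real.hasDerivAt_exp x).const_mul p).div (hDd x) (hD x).ne'
    have := h1.sub h2
    refine this.congr_deriv ?_
    have hne := (hD x).ne'
    field_simp
    ring
  have hg_nonneg : ∀ x : ℝ, 0 ≤ deriv g x := by
    intro x
    rw [(hgd x).deriv]
    have h1 : 0 < (1 - p + p * Real.exp x) ^ 2 := pow_pos (hD x) 2
    rw [sub_nonneg, div_le_iff₀ h1]
    nlinarith [sq_nonneg (1 - p - p * Real.exp x), Real.exp_pos x]
  have hgmono : Monotone g := monotone_of_deriv_nonneg (fun x => (hgd x).differentiableAt) hg_nonneg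
  have hg0 : g 0 = 0 := by simp [hg]
  have hf0 : f 0 = 0 := by simp [hf]
  have hfge : ∀ x : ℝ, 0 ≤ f x := by
    intro x
    rcases le_total 0 x with hx | hx
    · have hmono : MonotoneOn f (Set.Ici (0 : ℝ)) := by
        refine monotoneOn_of_deriv_nonneg (convex_Ici 0)
          (fun y _ => ((hfd y).differentiableAt).continuousAt.continuousWithinAt)
          (fun y _ => ((hfd y).differentiableAt).differentiableWithinAt) (fun y hy => ?_)
        rw [(hfd y).deriv, ← hg0]
        exact hgmono (le_of_lt (by simpa using hy))
      have := hmono (Set.self_mem_Ici) (Set.mem_Ici.2 hx) hx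
      rwa [hf0] at this
    · have hmono : AntitoneOn f (Set.Iic (0 : ℝ)) := by
        refine antitoneOn_of_deriv_nonpos (convex_Iic 0)
          (fun y _ => ((hfd y).differentiableAt).continuousAt.continuousWithinAt)
          (fun y _ => ((hfd y).differentiableAt).differentiableWithinAt) (fun y hy => ?_)
        rw [(hfd y).deriv, ← hg0]
        exact hgmono (le_of_lt (by simpa using hy))
      have := hmono (Set.mem_Iic.2 hx) (Set.self_mem_Iic) hx
      rwa [hf0] at this
  have := hfge s
  have hlog : Real.log (1 - p + p * Real.exp s) ≤ p * s + s ^ 2 / 8 := by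
    simp only [hf] at this; linarith
  calc 1 - p + p * Real.exp s = Real.exp (Real.log (1 - p + p * Real.exp s)) :=
        (Real.exp_log (hD s)).symm
    _ ≤ _ := Real.exp_le_exp.2 hlog


open MeasureTheory ProbabilityTheory Real

private lemma mgf_le_hoeffding {Ω : Type*} [MeasurableSpace Ω] {μ : Measure Ω}
    [IsProbabilityMeasure μ] {X : Ω → ℝ} (hX : Measurable X) {b : ℝ} (hb : 0 < b)
    (hXb : ∀ ω, X ω ∈ Set.Icc (0 : ℝ) b) (t : ℝ) :
    mgf X μ t ≤ Real.exp (t * (∫ ω, X ω ∂μ) + t ^ 2 * b ^ 2 / 8) := by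
  have hXint : Integrable X μ := by
    refine (integrable_const b).mono' hX.aestronglyMeasurable (ae_of_all _ fun ω => ?_)
    have h := hXb ω
    rw [Real.norm_eq_abs, abs_of_nonneg h.1]; exact h.2
  set p : ℝ := (∫ ω, X ω ∂μ) / b with hp
  have hEX0 : 0 ≤ ∫ ω, X ω ∂μ := integral_nonneg fun ω => (hXb ω).1
  have hEXb : (∫ ω, X ω ∂μ) ≤ b := by
    calc (∫ ω, X ω ∂μ) ≤ ∫ _, b ∂μ := integral_mono hXint (integrable_const b)
          (fun ω => (hXb ω).2)
      _ = b := by simp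
  have hp0 : 0 ≤ p := div_nonneg hEX0 hb.le
  have hp1 : p ≤ 1 := (div_le_one hb).2 hEXb
  -- pointwise convexity bound
  have hpt : ∀ ω, Real.exp (t * X ω) ≤ 1 - X ω / b + X ω / b * Real.exp (t * b) := by
    intro ω
    have h1 : 0 ≤ X ω / b := div_nonneg (hXb ω).1 hb.le
    have h2 : X ω / b ≤ 1 := (div_le_one hb).2 (hXb ω).2
    have h3 := convexOn_exp.2 (Set.mem_univ (0 : ℝ)) (Set.mem_univ (t * b))
      (by linarith : (0:ℝ) ≤ 1 - X ω / b) h1 (by ring)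
    simp only [smul_eq_mul, mul_zero, zero_add, Real.exp_zero, mul_one] at h3
    have harg : X ω / b * (t * b) = t * X ω := by field_simp
    rw [harg] at h3
    linarith
  have hint2 : Integrable (fun ω => 1 - X ω / b + X ω / b * Real.exp (t * b)) μ := by
    have : Integrable (fun ω => 1 + (Real.exp (t * b) - 1) * (X ω / b)) μ :=
      (integrable_const 1).add ((hXint.div_const b).const_mul _)
    refine this.congr (ae_of_all _ fun ω => ?_)
    ring
  have hmgf : mgf X μ t ≤ 1 - p + p * Real.exp (t * b) := by
    calc mgf X μ t = ∫ ω, Real.exp (t * X ω) ∂μ := rfl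
      _ ≤ ∫ ω, (1 - X ω / b + X ω / b * Real.exp (t * b)) ∂μ := by
          refine integral_mono ?_ hint2 hpt
          refine (hint2.mono' (hX.const_mul t).exp.aestronglyMeasurable
            (ae_of_all _ fun ω => ?_))
          rw [Real.norm_eq_abs, abs_of_nonneg (Real.exp_pos _).le]
          exact hpt ω
      _ = ∫ ω, (1 + (Real.exp (t * b) - 1) * (X ω / b)) ∂μ := by
          congr 1; funext ω; ring
      _ = 1 + (Real.exp (t * b) - 1) * p := by
          rw [integral_add (integrable_const 1) ((hXint.div_const b).const_mul _),
            integral_const_mul, integral_div, integral_const]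
          simp [hp]
      _ = 1 - p + p * Real.exp (t * b) := by ring
  refine hmgf.trans ?_
  have := hoeffding_analytic hp0 hp1 (t * b)
  refine this.trans (Real.exp_le_exp.2 (le_of_eq ?_))
  rw [hp]
  field_simp

set_option maxHeartbeats 800000 in
/-- Sample-size bound for watermark detection: if `T_1, …, T_N` are independent with values in
`[0, m]` and `E[∑ T_i] ≥ mN(1/2 + (γ/2)c)`, and `Z := (∑ T_i − mN/2)/√(mN/4)`, then
`√(mN)·γ·c ≥ q_α + √(2m·ln(1/β))` implies `P(Z ≤ q_α) ≤ β`; in particular, this holds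
whenever `N ≥ [q_α + √(2m·ln(1/β))]² / (m·γ²·c²)`. -/
theorem zscore_sample_size_bound {Ω : Type*} [MeasurableSpace Ω]
    (μ : Measure Ω) [IsProbabilityMeasure μ]
    (m N : ℕ) (hm : 1 ≤ m) (hN : 1 ≤ N)
    (γ c β qα : ℝ) (hγ : γ ∈ Set.Ioc (0 : ℝ) 1) (hc : c ∈ Set.Ioc (0 : ℝ) 1)
    (hβ : β ∈ Set.Ioo (0 : ℝ) 1)
    (T : Fin N → Ω → ℝ) (hmeas : ∀ i, Measurable (T i))
    (hindep : iIndepFun T μ)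
    (hbdd : ∀ i ω, T i ω ∈ Set.Icc (0 : ℝ) m)
    (hmean : (m : ℝ) * N * (1 / 2 + γ / 2 * c) ≤ ∫ ω, ∑ i : Fin N, T i ω ∂μ) :
    (Real.sqrt ((m : ℝ) * N) * γ * c ≥ qα + Real.sqrt (2 * m * Real.log (1 / β)) →
      (μ {ω | ((∑ i : Fin N, T i ω) - (m : ℝ) * N / 2) /
          Real.sqrt ((m : ℝ) * N / 4) ≤ qα}).toReal ≤ β) ∧
    ((N : ℝ) ≥ (qα + Real.sqrt (2 * m * Real.log (1 / β))) ^ 2 / ((m : ℝ) * γ ^ 2 * c ^ 2) →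
      (μ {ω | ((∑ i : Fin N, T i ω) - (m : ℝ) * N / 2) /
          Real.sqrt ((m : ℝ) * N / 4) ≤ qα}).toReal ≤ β) := by
  have hmpos : (0 : ℝ) < m := by exact_mod_cast hm
  have hNpos : (0 : ℝ) < N := by exact_mod_cast hN
  have hmN : (0 : ℝ) < (m : ℝ) * N := mul_pos hmpos hNpos
  set A : ℝ := Real.sqrt (2 * m * Real.log (1 / β)) with hA
  have hlogβ : 0 < Real.log (1 / β) := Real.log_pos ((one_lt_div hβ.1).2 hβ.2)
  have hA0 : 0 ≤ A := Real.sqrt_nonneg _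
  have hA2 : A ^ 2 = 2 * m * Real.log (1 / β) := Real.sq_sqrt (by positivity)
  have hsq2 : (Real.sqrt ((m : ℝ) * N)) ^ 2 = (m : ℝ) * N := Real.sq_sqrt hmN.le
  have hsqpos : 0 < Real.sqrt ((m : ℝ) * N) := Real.sqrt_pos.2 hmN
  have key : Real.sqrt ((m : ℝ) * N) * γ * c ≥ qα + A →
      (μ {ω | ((∑ i : Fin N, T i ω) - (m : ℝ) * N / 2) /
        Real.sqrt ((m : ℝ) * N / 4) ≤ qα}).toReal ≤ β := by
    intro h
    -- sqrt (mN/4) = sqrt(mN)/2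
    have hs4 : Real.sqrt ((m : ℝ) * N / 4) = Real.sqrt ((m : ℝ) * N) / 2 := by
      rw [show ((m : ℝ) * N / 4) = ((m : ℝ) * N) * (1 / 2) ^ 2 by ring,
        Real.sqrt_mul hmN.le, Real.sqrt_sq (by norm_num : (0:ℝ) ≤ 1 / 2)]
      ring
    have hs4pos : 0 < Real.sqrt ((m : ℝ) * N / 4) := by rw [hs4]; positivity
    set ε : ℝ := (m : ℝ) * N / 2 + qα * (Real.sqrt ((m : ℝ) * N) / 2) with hε
    have hset : {ω | ((∑ i : Fin N, T i ω) - (m : ℝ) * N / 2) /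
        Real.sqrt ((m : ℝ) * N / 4) ≤ qα} = {ω | (∑ i : Fin N, T i ω) ≤ ε} := by
      ext ω
      simp only [Set.mem_setOf_eq]
      rw [hs4, div_le_iff₀ (by positivity : (0:ℝ) < Real.sqrt ((m : ℝ) * N) / 2), hε]
      constructor <;> intro <;> linarith
    set E : ℝ := ∫ ω, ∑ i : Fin N, T i ω ∂μ with hE
    set d : ℝ := E - ε with hd
    have hdlb : Real.sqrt ((m : ℝ) * N) / 2 * A ≤ d := by
      have h2 : A ≤ Real.sqrt ((m : ℝ) * N) * γ * c - qα := by linarith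
      have h3 : Real.sqrt ((m : ℝ) * N) / 2 * A ≤
          Real.sqrt ((m : ℝ) * N) / 2 * (Real.sqrt ((m : ℝ) * N) * γ * c - qα) :=
        mul_le_mul_of_nonneg_left h2 (by positivity)
      have h4 : Real.sqrt ((m : ℝ) * N) / 2 * (Real.sqrt ((m : ℝ) * N) * γ * c - qα)
          = (m : ℝ) * N * (γ * c) / 2 - qα * (Real.sqrt ((m : ℝ) * N) / 2) := by
        linear_combination (γ * c / 2) * hsq2
      rw [hd, hε]
      rw [h4] at h3
      linarith [hmean]
    have hd0 : 0 ≤ d := le_trans (by positivity) hdlb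
    set t : ℝ := -(4 * d) / ((N : ℝ) * (m : ℝ) ^ 2) with ht
    have ht0 : t ≤ 0 :=
      div_nonpos_of_nonpos_of_nonneg (by linarith) (le_of_lt (mul_pos hNpos (pow_pos hmpos 2)))
    -- integrability of exp (t * T i)
    have hinti : ∀ i, Integrable (fun ω => Real.exp (t * T i ω)) μ := by
      intro i
      refine (integrable_const (Real.exp (|t| * m))).mono'
        ((hmeas i).const_mul t).exp.aestronglyMeasurable (ae_of_all _ fun ω => ?_)
      rw [Real.norm_eq_abs, abs_of_nonneg (Real.exp_pos _).le, Real.exp_le_exp]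
      have h1 := (hbdd i ω).1; have h2 := (hbdd i ω).2
      calc t * T i ω ≤ |t * T i ω| := le_abs_self _
        _ = |t| * |T i ω| := abs_mul _ _
        _ ≤ |t| * m := by
            apply mul_le_mul_of_nonneg_left _ (abs_nonneg t)
            rw [abs_of_nonneg h1]; exact h2
    have hTiInt : ∀ i, Integrable (T i) μ := by
      intro i
      refine (integrable_const (m : ℝ)).mono' (hmeas i).aestronglyMeasurable
        (ae_of_all _ fun ω => ?_)
      rw [Real.norm_eq_abs, abs_of_nonneg (hbdd i ω).1]; exact (hbdd i ω).2
    have hintS : Integrable (fun ω => Real.exp (t * (∑ i : Fin N, T i) ω)) μ :=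
      hindep.integrable_exp_mul_sum hmeas (fun i _ => hinti i)
    have hch := measure_le_le_exp_mul_mgf (X := ∑ i : Fin N, T i) (μ := μ) ε ht0 hintS
    simp only [Finset.sum_apply] at hch
    rw [hset]
    refine hch.trans ?_
    -- bound the mgf of the sum
    have hmgf : mgf (∑ i : Fin N, T i) μ t ≤
        Real.exp (t * E + (N : ℝ) * (t ^ 2 * (m : ℝ) ^ 2 / 8)) := by
      rw [hindep.mgf_sum hmeas Finset.univ]
      have hstep : ∀ i : Fin N, mgf (T i) μ t ≤
          Real.exp (t * (∫ ω, T i ω ∂μ) + t ^ 2 * (m : ℝ) ^ 2 / 8) :=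
        fun i => mgf_le_hoeffding (hmeas i) hmpos (hbdd i) t
      calc (∏ i : Fin N, mgf (T i) μ t)
          ≤ ∏ i : Fin N, Real.exp (t * (∫ ω, T i ω ∂μ) + t ^ 2 * (m : ℝ) ^ 2 / 8) :=
            Finset.prod_le_prod (fun i _ => mgf_nonneg) (fun i _ => hstep i)
        _ = Real.exp (∑ i : Fin N, (t * (∫ ω, T i ω ∂μ) + t ^ 2 * (m : ℝ) ^ 2 / 8)) :=
            (Real.exp_sum _ _).symm
        _ = Real.exp (t * E + (N : ℝ) * (t ^ 2 * (m : ℝ) ^ 2 / 8)) := by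
            rw [Finset.sum_add_distrib, ← Finset.mul_sum, Finset.sum_const, Finset.card_univ,
              Fintype.card_fin, nsmul_eq_mul]
            rw [hE, integral_finset_sum Finset.univ (fun i _ => hTiInt i)]
    calc Real.exp (-t * ε) * mgf (∑ i : Fin N, T i) μ t
        ≤ Real.exp (-t * ε) * Real.exp (t * E + (N : ℝ) * (t ^ 2 * (m : ℝ) ^ 2 / 8)) := by
          exact mul_le_mul_of_nonneg_left hmgf (Real.exp_pos _).le
      _ = Real.exp (t * d + (N : ℝ) * t ^ 2 * (m : ℝ) ^ 2 / 8) := by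
          rw [← Real.exp_add]; congr 1; rw [hd]; ring
      _ ≤ β := by
          rw [show β = Real.exp (Real.log β) from (Real.exp_log hβ.1).symm, Real.exp_le_exp]
          have hlogb : Real.log β = -Real.log (1 / β) := by
            rw [one_div, Real.log_inv, neg_neg]
          rw [hlogb]
          have htd : t * d + (N : ℝ) * t ^ 2 * (m : ℝ) ^ 2 / 8 =
              -(2 * d ^ 2 / ((N : ℝ) * (m : ℝ) ^ 2)) := by
            rw [ht]; field_simp; ring
          rw [htd, neg_le_neg_iff]
          -- need log(1/β) ≤ 2 d² / (N m²)
          have h5 : (Real.sqrt ((m : ℝ) * N) / 2 * A) ^ 2 ≤ d ^ 2 := by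
            have := mul_le_mul hdlb hdlb (by positivity) hd0
            simpa [sq] using this
          have h6 : (Real.sqrt ((m : ℝ) * N) / 2 * A) ^ 2
              = (m : ℝ) * N / 4 * (2 * (m : ℝ) * Real.log (1 / β)) := by
            rw [mul_pow, div_pow, hsq2, hA2]; ring
          rw [le_div_iff₀ (mul_pos hNpos (pow_pos hmpos 2))]
          rw [h6] at h5
          linarith [h5]
  constructor
  · exact key
  · intro hN2
    apply key
    have hQ : (qα + A) ^ 2 ≤ (m : ℝ) * N * γ ^ 2 * c ^ 2 := by
      rw [ge_iff_le, div_le_iff₀ (mul_pos (mul_pos hmpos (pow_pos hγ.1 2)) (pow_pos hc.1 2))] at hN2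
      nlinarith [hN2]
    calc qα + A ≤ |qα + A| := le_abs_self _
      _ = Real.sqrt ((qα + A) ^ 2) := (Real.sqrt_sq_eq_abs _).symm
      _ ≤ Real.sqrt ((m : ℝ) * N * γ ^ 2 * c ^ 2) := Real.sqrt_le_sqrt hQ
      _ = Real.sqrt ((m : ℝ) * N) * γ * c := by
          rw [show (m : ℝ) * N * γ ^ 2 * c ^ 2 = ((m : ℝ) * N) * (γ * c) ^ 2 by ring,
            Real.sqrt_mul hmN.le, Real.sqrt_sq (le_of_lt (mul_pos hγ.1 hc.1))]
          ring
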